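/- Let f : ℕ → ℕ be an injective computable function whose range is not computable, and let G be the group with presentation ⟨ a_i, b_i, c_i (i ∈ ℕ) | c_{f(i)} = a_{f(i)}^i b_{f(i)}^i (i ∈ ℕ) ⟩. Then PP[2] is undecidable for G: the set of triples of words (u, v, w) such that the equation ⟦u⟧ = ⟦v⟧^x ⟦w⟧^y has a solution (x,y) ∈ ℤ² in G is not computable. -/
import Mathlib


/-- The relators `c_{f(i)}⁻¹ a_{f(i)}^i b_{f(i)}^i` (`i ∈ ℕ`) of the presentation
`⟨ aᵢ, bᵢ, cᵢ (i ∈ ℕ) | c_{f(i)} = a_{f(i)}^i b_{f(i)}^i (i ∈ ℕ) ⟩`.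
The generator `a_j` is `(j, 0)`, `b_j` is `(j, 1)` and `c_j` is `(j, 2)`. -/
def abcRels (f : ℕ → ℕ) : Set (FreeGroup (ℕ × Fin 3)) :=
  Set.range fun i =>
    (FreeGroup.of (f i, (2 : Fin 3)))⁻¹ *
      FreeGroup.of (f i, (0 : Fin 3)) ^ i * FreeGroup.of (f i, (1 : Fin 3)) ^ i

/-- The group `⟨ aᵢ, bᵢ, cᵢ (i ∈ ℕ) | c_{f(i)} = a_{f(i)}^i b_{f(i)}^i (i ∈ ℕ) ⟩`. -/
abbrev ABCGroup (f : ℕ → ℕ) := PresentedGroup (abcRels f)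

/-- The image of the generator `(j, t)` in `ABCGroup f` (`t = 0, 1, 2` for `a_j, b_j, c_j`). -/
def abcGen (f : ℕ → ℕ) (x : ℕ × Fin 3) : ABCGroup f := PresentedGroup.of x

/-- The element of `ABCGroup f` represented by a word over the generators. -/
def abcEval (f : ℕ → ℕ) (w : List ((ℕ × Fin 3) × Bool)) : ABCGroup f :=
  PresentedGroup.mk (abcRels f) (FreeGroup.mk w)

lemma abcEval_single (f : ℕ → ℕ) (x : ℕ × Fin 3) :
    abcEval f [(x, true)] = abcGen f x := rfl

lemma abc_rel (f : ℕ → ℕ) (i : ℕ) :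
    abcGen f (f i, 2) = abcGen f (f i, 0) ^ i * abcGen f (f i, 1) ^ i := by
  have hmem : ((FreeGroup.of (f i, (2 : Fin 3)))⁻¹ *
      FreeGroup.of (f i, (0 : Fin 3)) ^ i * FreeGroup.of (f i, (1 : Fin 3)) ^ i) ∈
      Subgroup.normalClosure (abcRels f) :=
    Subgroup.subset_normalClosure ⟨i, rfl⟩
  have h1 : PresentedGroup.mk (abcRels f)
      ((FreeGroup.of (f i, (2 : Fin 3)))⁻¹ *
        FreeGroup.of (f i, (0 : Fin 3)) ^ i * FreeGroup.of (f i, (1 : Fin 3)) ^ i) = 1 :=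
    (QuotientGroup.eq_one_iff _).mpr hmem
  rw [map_mul, map_mul, map_inv, map_pow, map_pow, mul_assoc] at h1
  exact inv_mul_eq_one.mp h1

lemma abc_no_sol (f : ℕ → ℕ) {n : ℕ} (hn : n ∉ Set.range f) (x y : ℤ) :
    abcGen f (n, 2) ≠ abcGen f (n, 0) ^ x * abcGen f (n, 1) ^ y := by
  classical
  set g : ℕ × Fin 3 → Multiplicative ℤ :=
    fun p => if p = (n, (2 : Fin 3)) then Multiplicative.ofAdd 1 else 1 with hg
  have hrel : ∀ r ∈ abcRels f, FreeGroup.lift g r = 1 := by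
    rintro r ⟨i, rfl⟩
    have hne : f i ≠ n := fun h => hn ⟨i, h⟩
    simp only [map_mul, map_inv, map_pow, FreeGroup.lift_apply_of, hg]
    rw [if_neg (by simp [hne]), if_neg (by simp [hne]), if_neg (by simp [hne])]
    simp
  intro heq
  have := congrArg (PresentedGroup.toGroup hrel) heq
  rw [map_mul, map_zpow, map_zpow] at this
  have h2 : PresentedGroup.toGroup hrel (abcGen f (n, 2)) = Multiplicative.ofAdd 1 := by
    simpa [abcGen, hg] using PresentedGroup.toGroup.of hrel (x := (n, (2 : Fin 3)))
  have h0 : PresentedGroup.toGroup hrel (abcGen f (n, 0)) = 1 := by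
    simpa [abcGen, hg] using PresentedGroup.toGroup.of hrel (x := (n, (0 : Fin 3)))
  have h1' : PresentedGroup.toGroup hrel (abcGen f (n, 1)) = 1 := by
    simpa [abcGen, hg] using PresentedGroup.toGroup.of hrel (x := (n, (1 : Fin 3)))
  rw [h2, h0, h1', one_zpow, one_zpow, mul_one] at this
  simpa using congrArg Multiplicative.toAdd this

/-- For an injective computable `f : ℕ → ℕ` with non-computable range, the problem
PP[2] for the group `⟨ aᵢ, bᵢ, cᵢ (i ∈ ℕ) | c_{f(i)} = a_{f(i)}^i b_{f(i)}^i (i ∈ ℕ) ⟩`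
is undecidable: the set of triples of words `(u, v, w)` such that
`⟦u⟧ = ⟦v⟧^x ⟦w⟧^y` has an integer solution `(x, y)` is not computable. -/
theorem abcGroup_PP2_undecidable (f : ℕ → ℕ) (hf : Function.Injective f)
    (hcf : Computable f) (hrange : ¬ ComputablePred fun n : ℕ => n ∈ Set.range f) :
    ¬ ComputablePred
        fun t : List ((ℕ × Fin 3) × Bool) × List ((ℕ × Fin 3) × Bool) × List ((ℕ × Fin 3) × Bool) =>
          ∃ x y : ℤ, abcEval f t.1 = abcEval f t.2.1 ^ x * abcEval f t.2.2 ^ y := by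
  intro hP
  apply hrange
  obtain ⟨b, hb, hbeq⟩ := ComputablePred.computable_iff.mp hP
  -- the reduction
  set h : ℕ → List ((ℕ × Fin 3) × Bool) × List ((ℕ × Fin 3) × Bool) × List ((ℕ × Fin 3) × Bool) :=
    fun n => ([((n, 2), true)], [((n, 0), true)], [((n, 1), true)]) with hh
  have hhcomp : Computable h := by
    have single : ∀ t : Fin 3, Primrec fun n : ℕ => [((n, t), true)] := fun t =>
      Primrec.list_cons.comp ((Primrec.id.pair (Primrec.const t)).pair (Primrec.const true))
        (Primrec.const [])
    exact Primrec.to_comp (((single 2).pair ((single 0).pair (single 1))))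
  have key : ∀ n : ℕ, n ∈ Set.range f ↔
      (∃ x y : ℤ, abcEval f (h n).1 = abcEval f (h n).2.1 ^ x * abcEval f (h n).2.2 ^ y) := by
    intro n
    constructor
    · rintro ⟨i, rfl⟩
      refine ⟨(i : ℤ), (i : ℤ), ?_⟩
      simp only [hh, abcEval_single, zpow_natCast]
      exact abc_rel f i
    · rintro ⟨x, y, hxy⟩
      by_contra hn
      exact abc_no_sol f hn x y (by simpa only [hh, abcEval_single] using hxy)
  refine ComputablePred.computable_iff.mpr ⟨fun n => b (h n), hb.comp hhcomp, ?_⟩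
  funext n
  rw [← congrFun hbeq (h n)]
  exact propext (key n)
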